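/- Let x(s) = s², x_ν(s) = (s+ν/2)², and the generalized power as above. Then the z-backward difference of the reciprocal satisfies: (1/[x_ν(s)−x_ν(z)]^{(μ)} − 1/[x_ν(s)−x_ν(z−1)]^{(μ)}) / (x_{ν−μ+1}(z) − x_{ν−μ+1}(z−1)) = μ / [x_ν(s) − x_ν(z)]^{(μ+1)}. -/

import Mathlib

/-- Shifted quadratic lattice `x_γ(s) = (s + γ/2)²`. -/
noncomputable def xsh (γ s : ℝ) : ℝ := (s + γ / 2) ^ 2

/-- Generalized power `[x_ν(s) − x_ν(z)]^{(μ)}` on the quadratic lattice. -/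
noncomputable def gp (ν s z μ : ℝ) : ℝ :=
  Real.Gamma (s - z + μ) * Real.Gamma (s + z + ν + 1) /
    (Real.Gamma (s - z) * Real.Gamma (s + z + ν - μ + 1))

/-- `x` is not a nonpositive integer. -/
def NotPole (x : ℝ) : Prop := ∀ n : ℕ, x ≠ -(n : ℝ)

theorem stmt5 (s z ν μ : ℝ)
    (h1 : NotPole (s - z)) (h2 : NotPole (s - z + 1))
    (h3 : NotPole (s - z + μ)) (h4 : NotPole (s - z + μ + 1))
    (h5 : NotPole (s + z + ν)) (h6 : NotPole (s + z + ν + 1))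
    (h7 : NotPole (s + z + ν - μ)) (h8 : NotPole (s + z + ν - μ + 1))
    (hA : gp ν s z μ ≠ 0) (hB : gp ν s (z - 1) μ ≠ 0)
    (hd : xsh (ν - μ + 1) z ≠ xsh (ν - μ + 1) (z - 1)) :
    (1 / gp ν s z μ - 1 / gp ν s (z - 1) μ) /
        (xsh (ν - μ + 1) z - xsh (ν - μ + 1) (z - 1))
      = μ / gp ν s z (μ + 1) := by
  have ha : s - z ≠ 0 := by simpa using h1 0
  have hb : s + z + ν ≠ 0 := by simpa using h5 0
  have hc : s - z + μ ≠ 0 := by simpa using h3 0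
  have hdd : s + z + ν - μ ≠ 0 := by simpa using h7 0
  have Ga : Real.Gamma (s - z) ≠ 0 := Real.Gamma_ne_zero h1
  have Gb : Real.Gamma (s + z + ν) ≠ 0 := Real.Gamma_ne_zero h5
  have Gc : Real.Gamma (s - z + μ) ≠ 0 := Real.Gamma_ne_zero h3
  have Gd : Real.Gamma (s + z + ν - μ) ≠ 0 := Real.Gamma_ne_zero h7
  have hx : xsh (ν - μ + 1) z - xsh (ν - μ + 1) (z - 1) = 2 * z + ν - μ := by
    simp only [xsh]; ring
  have hx0 : (2 * z + ν - μ) ≠ 0 := by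
    rw [← hx]; exact sub_ne_zero.mpr hd
  have e1 : s - (z - 1) + μ = (s - z + μ) + 1 := by ring
  have e2 : s + (z - 1) + ν + 1 = s + z + ν := by ring
  have e3 : s - (z - 1) = (s - z) + 1 := by ring
  have e4 : s + (z - 1) + ν - μ + 1 = s + z + ν - μ := by ring
  have e5 : s + z + ν - μ + 1 = (s + z + ν - μ) + 1 := by ring
  have e6 : s + z + ν + 1 = (s + z + ν) + 1 := by ring
  have e7 : s - z + (μ + 1) = (s - z + μ) + 1 := by ring
  have e8 : s + z + ν - (μ + 1) + 1 = s + z + ν - μ := by ring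
  have gA : gp ν s z μ = Real.Gamma (s - z + μ) * ((s + z + ν) * Real.Gamma (s + z + ν)) /
      (Real.Gamma (s - z) * ((s + z + ν - μ) * Real.Gamma (s + z + ν - μ))) := by
    rw [gp, e6, e5, Real.Gamma_add_one hb, Real.Gamma_add_one hdd]
  have gB : gp ν s (z - 1) μ = (s - z + μ) * Real.Gamma (s - z + μ) * Real.Gamma (s + z + ν) /
      ((s - z) * Real.Gamma (s - z) * Real.Gamma (s + z + ν - μ)) := by
    rw [gp, e1, e2, e3, e4, Real.Gamma_add_one hc, Real.Gamma_add_one ha]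
  have gC : gp ν s z (μ + 1) = (s - z + μ) * Real.Gamma (s - z + μ) *
      ((s + z + ν) * Real.Gamma (s + z + ν)) /
      (Real.Gamma (s - z) * Real.Gamma (s + z + ν - μ)) := by
    rw [gp, e7, e8, e6, Real.Gamma_add_one hc, Real.Gamma_add_one hb]
  rw [gA, gB, gC, hx]
  field_simp
  have hx1 : z * 2 - μ + ν ≠ 0 := by intro h; apply hx0; linarith
  ring_nf
  field_simp
  ring
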